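/- Let U ⊆ ℝ² be an open, connected set such that for every x₀ ∈ ℝ the vertical slice U ∩ ({x₀} × ℝ) is either empty or connected. Then U is a contractible topological space. -/

import Mathlib

open Set

/-- An open connected subset `U ⊆ ℝ²` all of whose vertical slices are empty or
connected is a contractible topological space. -/
theorem stmt4 (U : Set (ℝ × ℝ)) (hopen : IsOpen U) (hconn : IsConnected U)
    (hslice : ∀ x₀ : ℝ, U ∩ {p : ℝ × ℝ | p.1 = x₀} = ∅ ∨
      IsConnected (U ∩ {p : ℝ × ℝ | p.1 = x₀})) :
    ContractibleSpace U := by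
  -- vertical slices, viewed as subsets of ℝ, are convex
  have hsliceconv : ∀ x : ℝ, Convex ℝ {y : ℝ | (x, y) ∈ U} := by
    intro x
    rcases hslice x with h | h
    · have : {y : ℝ | (x, y) ∈ U} = ∅ := by
        ext y
        simp only [mem_setOf_eq, mem_empty_iff_false, iff_false]
        intro hy
        have : (x, y) ∈ U ∩ {p : ℝ × ℝ | p.1 = x} := ⟨hy, rfl⟩
        rw [h] at this
        exact this
      rw [this]; exact convex_empty
    · have himg : {y : ℝ | (x, y) ∈ U} = Prod.snd '' (U ∩ {p : ℝ × ℝ | p.1 = x}) := by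
        ext y
        constructor
        · intro hy; exact ⟨(x, y), ⟨hy, rfl⟩, rfl⟩
        · rintro ⟨⟨a, b⟩, ⟨hab, (ha : a = x)⟩, rfl⟩
          subst ha; exact hab
      rw [himg, convex_iff_ordConnected]
      exact ((h.image _ continuous_snd.continuousOn).isPreconnected).ordConnected
  -- the projection of U on the first axis
  set J : Set ℝ := Prod.fst '' U with hIdef
  have hIconv : Convex ℝ J := by
    rw [convex_iff_ordConnected]
    exact ((hconn.image _ continuous_fst.continuousOn).isPreconnected).ordConnected
  have hIne : J.Nonempty := hconn.nonempty.image _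
  -- a continuous selection c : J → ℝ with (x, c x) ∈ U
  obtain ⟨c, hc⟩ : ∃ c : C(J, ℝ), ∀ x : J, ((x : ℝ), c x) ∈ U := by
    refine exists_continuous_forall_mem_convex_of_local_const
      (t := fun x : J => {y : ℝ | ((x : ℝ), y) ∈ U}) (fun x => hsliceconv x) ?_
    rintro ⟨x, p, hpU, rfl⟩
    refine ⟨p.2, ?_⟩
    have hV : IsOpen {a : ℝ | (a, p.2) ∈ U} := hopen.preimage (by fun_prop)
    have hVmem : ∀ᶠ a in nhds (p.1 : ℝ), (a, p.2) ∈ U := hV.eventually_mem hpU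
    have hT : Filter.Tendsto (Subtype.val : J → ℝ) (nhds ⟨p.1, p, hpU, rfl⟩) (nhds p.1) :=
      continuous_subtype_val.tendsto _
    exact hT.eventually hVmem
  -- maps between U and J
  have hfmem : ∀ u : U, (u : ℝ × ℝ).1 ∈ J := fun u => ⟨u.1, u.2, rfl⟩
  let f : C(U, J) := ⟨fun u => ⟨(u : ℝ × ℝ).1, hfmem u⟩,
    (continuous_fst.comp continuous_subtype_val).subtype_mk _⟩
  let g : C(J, U) := ⟨fun x => ⟨((x : ℝ), c x), hc x⟩,
    (continuous_subtype_val.prodMk c.continuous).subtype_mk _⟩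
  -- homotopy from g ∘ f to the identity of U
  have hHmem : ∀ (t : unitInterval) (u : U),
      ((u : ℝ × ℝ).1, (1 - (t : ℝ)) * c (f u) + (t : ℝ) * (u : ℝ × ℝ).2) ∈ U := by
    intro t u
    exact hsliceconv (u : ℝ × ℝ).1 (hc (f u)) u.2 (by simpa using t.2.2) t.2.1 (by ring)
  let H : ContinuousMap.Homotopy (g.comp f) (ContinuousMap.id U) :=
    { toFun := fun q => ⟨((q.2 : ℝ × ℝ).1,
        (1 - (q.1 : ℝ)) * c (f q.2) + (q.1 : ℝ) * (q.2 : ℝ × ℝ).2), hHmem q.1 q.2⟩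
      continuous_toFun := by
        refine Continuous.subtype_mk ?_ _
        fun_prop
      map_zero_left := by
        intro u
        apply Subtype.ext
        simp [f, g]
      map_one_left := by
        intro u
        apply Subtype.ext
        simp [f, g] }
  have hfg : f.comp g = ContinuousMap.id J := by
    ext x
    rfl
  let e : ContinuousMap.HomotopyEquiv U J :=
    { toFun := f
      invFun := g
      left_inv := ⟨H⟩
      right_inv := hfg ▸ ContinuousMap.Homotopic.refl _ }
  have : ContractibleSpace J := hIconv.contractibleSpace hIne
  exact e.contractibleSpace
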